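/- arXiv:2212.09960 — 6 statements merged into one kernel-verified Lean document; each statement's English description precedes it below -/
import Mathlib

section
/- Let X ⊆ ℤ^n be a finite c_1-connected set, equipped with the Euclidean metric d, and let T: X → X be a weakly uniformly strict contraction, i.e., for every ε > 0 there exists δ > 0 such that ε ≤ d(x,y) < ε + δ implies d(Tx,Ty) < ε for all x,y ∈ X. Then T is a constant function. -/
open Filter Topology

/-- Points of ℤ^n are c₁-adjacent if they differ by exactly 1 in exactly one
coordinate and agree in all other coordinates. -/
def C1Adj {n : ℕ} (x y : Fin n → ℤ) : Prop :=
  ∃ i, (x i - y i).natAbs = 1 ∧ ∀ j, j ≠ i → x j = y j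

/-- A subset of ℤ^n is c₁-connected if any two of its points are joined by a
path in the set whose consecutive points are c₁-adjacent. -/
def C1Connected {n : ℕ} (X : Set (Fin n → ℤ)) : Prop :=
  ∀ x ∈ X, ∀ y ∈ X,
    Relation.ReflTransGen (fun a b => a ∈ X ∧ b ∈ X ∧ C1Adj a b) x y

/-- The Euclidean metric on ℤ^n. -/
noncomputable def euclDist {n : ℕ} (x y : Fin n → ℤ) : ℝ :=
  Real.sqrt (∑ i, ((x i : ℝ) - (y i : ℝ)) ^ 2)

lemma euclDist_ge_one {n : ℕ} {x y : Fin n → ℤ} (h : x ≠ y) :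
    1 ≤ euclDist x y := by
  obtain ⟨i, hi⟩ : ∃ i, x i ≠ y i := by
    by_contra hc
    push_neg at hc
    exact h (funext hc)
  have h1 : (1 : ℝ) ≤ ((x i : ℝ) - (y i : ℝ)) ^ 2 := by
    have : (1 : ℤ) ≤ |x i - y i| := Int.one_le_abs (sub_ne_zero.mpr hi)
    have : (1 : ℝ) ≤ |((x i : ℝ) - (y i : ℝ))| := by
      push_cast [← Int.cast_abs] at this ⊢
      exact_mod_cast this
    calc (1:ℝ) = 1^2 := by ring
    _ ≤ |((x i : ℝ) - (y i : ℝ))|^2 := by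
        apply pow_le_pow_left₀ (by norm_num) this
    _ = _ := by rw [sq_abs]
  have h2 : (1 : ℝ) ≤ ∑ j, ((x j : ℝ) - (y j : ℝ)) ^ 2 :=
    le_trans h1 (Finset.single_le_sum (f := fun j => ((x j : ℝ) - (y j : ℝ)) ^ 2)
      (fun j _ => sq_nonneg _) (Finset.mem_univ i))
  calc (1:ℝ) = Real.sqrt 1 := Real.sqrt_one.symm
  _ ≤ euclDist x y := Real.sqrt_le_sqrt h2

lemma euclDist_eq_one_of_adj {n : ℕ} {x y : Fin n → ℤ} (h : C1Adj x y) :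
    euclDist x y = 1 := by
  obtain ⟨i, h1, h2⟩ := h
  have hsum : ∑ j, ((x j : ℝ) - (y j : ℝ)) ^ 2 = 1 := by
    rw [Finset.sum_eq_single i]
    · have : ((x i : ℝ) - (y i : ℝ)) = ((x i - y i : ℤ) : ℝ) := by push_cast; ring
      have habs : |x i - y i| = 1 := by
        rw [Int.abs_eq_natAbs, h1]; rfl
      rw [this, ← Int.cast_pow, ← sq_abs, habs]
      norm_num
    · intro j _ hj
      rw [h2 j hj]; ring
    · intro hi; exact absurd (Finset.mem_univ i) hi
  rw [euclDist, hsum, Real.sqrt_one]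

/-- A weakly uniformly strict contraction on a finite c₁-connected
subset of ℤ^n with the Euclidean metric is constant. -/
theorem constant_of_weakly_uniformly_strict_on_c1_connected
    {n : ℕ} (X : Set (Fin n → ℤ)) (hfin : X.Finite) (hconn : C1Connected X)
    (T : (Fin n → ℤ) → (Fin n → ℤ)) (hT : ∀ x ∈ X, T x ∈ X)
    (hwus : ∀ ε > (0 : ℝ), ∃ δ > (0 : ℝ), ∀ x ∈ X, ∀ y ∈ X,
      ε ≤ euclDist x y → euclDist x y < ε + δ → euclDist (T x) (T y) < ε) :
    ∀ x ∈ X, ∀ y ∈ X, T x = T y := by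
  obtain ⟨δ, hδ, hcon⟩ := hwus 1 one_pos
  have key : ∀ a b : Fin n → ℤ, a ∈ X → b ∈ X → C1Adj a b → T a = T b := by
    intro a b ha hb hadj
    have hd := euclDist_eq_one_of_adj hadj
    have := hcon a ha b hb (le_of_eq hd.symm) (by rw [hd]; linarith)
    by_contra hne
    exact absurd this (not_lt.mpr (euclDist_ge_one hne))
  intro x hx y hy
  induction hconn x hx y hy with
  | refl => rfl
  | tail _ hab ih => exact (ih hab.1).trans (key _ _ hab.1 hab.2.1 hab.2.2)
end

section
/- Let (X,d) be a nonempty finite metric space, let β: [0,∞) → [0,1), and let f: X → X satisfy d(f(x),f(y)) ≤ β(d(x,y))·d(x,y) for all x,y ∈ X. Then f is a contraction map, i.e., there exists k ∈ [0,1) such that d(f(x),f(y)) ≤ k·d(x,y) for all x,y ∈ X. -/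
open Filter Topology

/-- On a nonempty finite metric space, every digital Geraghty
contraction map is a contraction map. -/
theorem contraction_of_geraghty_on_finite
    {X : Type*} [MetricSpace X] [Finite X] [Nonempty X]
    (β : ℝ → ℝ) (hβ : ∀ t, 0 ≤ t → 0 ≤ β t ∧ β t < 1)
    (f : X → X)
    (hf : ∀ x y : X, dist (f x) (f y) ≤ β (dist x y) * dist x y) :
    ∃ k : ℝ, 0 ≤ k ∧ k < 1 ∧ ∀ x y : X, dist (f x) (f y) ≤ k * dist x y := by
  haveI : Fintype X := Fintype.ofFinite X
  have hne : (Finset.univ : Finset (X × X)).Nonempty := Finset.univ_nonempty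
  set k := Finset.univ.sup' hne (fun p : X × X => β (dist p.1 p.2)) with hk
  have hk0 : 0 ≤ k := by
    obtain ⟨x⟩ := ‹Nonempty X›
    exact le_trans (hβ _ dist_nonneg).1 (Finset.le_sup' (fun p : X × X => β (dist p.1 p.2)) (Finset.mem_univ (x, x)))
  have hk1 : k < 1 := by
    apply Finset.sup'_lt_iff hne |>.2
    intro p _
    exact (hβ _ dist_nonneg).2
  refine ⟨k, hk0, hk1, fun x y => ?_⟩
  calc dist (f x) (f y) ≤ β (dist x y) * dist x y := hf x y
    _ ≤ k * dist x y := by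
        apply mul_le_mul_of_nonneg_right _ dist_nonneg
        exact Finset.le_sup' (fun p : X × X => β (dist p.1 p.2)) (Finset.mem_univ (x, y))
end

section
/- Let X ⊆ ℤ^n be c_1-connected, equipped with the Euclidean metric d. Let f: X → X be a digital Geraghty contraction map, i.e., there exists β: [0,∞) → [0,1) with d(f(x),f(y)) ≤ β(d(x,y))·d(x,y) for all x,y ∈ X. Then f is a constant function. -/
open Filter Topology

/-- A digital Geraghty contraction map on a c₁-connected subset of
ℤ^n with the Euclidean metric is constant. -/
theorem geraghty_constant_on_c1_connected
    {n : ℕ} (X : Set (Fin n → ℤ)) (hconn : C1Connected X)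
    (f : (Fin n → ℤ) → (Fin n → ℤ)) (hf : ∀ x ∈ X, f x ∈ X)
    (β : ℝ → ℝ) (hβ : ∀ t, 0 ≤ t → 0 ≤ β t ∧ β t < 1)
    (hcontr : ∀ x ∈ X, ∀ y ∈ X,
      euclDist (f x) (f y) ≤ β (euclDist x y) * euclDist x y) :
    ∀ x ∈ X, ∀ y ∈ X, f x = f y := by
  -- distance between distinct integer points is ≥ 1
  have hdist_eq : ∀ (a b : Fin n → ℤ), euclDist a b < 1 → a = b := by
    intro a b h
    by_contra hne
    obtain ⟨i, hi⟩ := Function.ne_iff.mp hne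
    have h1 : (1 : ℝ) ≤ ((a i : ℝ) - (b i : ℝ)) ^ 2 := by
      have : (1 : ℤ) ≤ (a i - b i) ^ 2 := by
        have h0 := Int.one_le_abs (sub_ne_zero.mpr hi)
        nlinarith [sq_abs (a i - b i)]
      calc (1 : ℝ) ≤ ((a i - b i : ℤ) : ℝ) ^ 2 := by exact_mod_cast this
        _ = ((a i : ℝ) - (b i : ℝ)) ^ 2 := by push_cast; ring
    have hsum : (1 : ℝ) ≤ ∑ j, ((a j : ℝ) - (b j : ℝ)) ^ 2 :=
      le_trans h1 (Finset.single_le_sum (f := fun j => ((a j : ℝ) - (b j : ℝ)) ^ 2) (fun j _ => by positivity) (Finset.mem_univ i))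
    have : (1 : ℝ) ≤ euclDist a b := by
      unfold euclDist
      calc (1 : ℝ) = Real.sqrt 1 := (Real.sqrt_one).symm
        _ ≤ _ := Real.sqrt_le_sqrt hsum
    linarith
  -- adjacent points have distance 1
  have hadj_dist : ∀ (a b : Fin n → ℤ), C1Adj a b → euclDist a b = 1 := by
    intro a b ⟨i, hi, hj⟩
    unfold euclDist
    rw [Finset.sum_eq_single i]
    · have habs : |a i - b i| = 1 := by
        rw [Int.abs_eq_natAbs, hi]; rfl
      have : ((a i : ℝ) - (b i : ℝ)) ^ 2 = 1 := by
        have h2 : (a i - b i) ^ 2 = 1 := by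
          rw [← sq_abs, habs, one_pow]
        calc ((a i : ℝ) - (b i : ℝ)) ^ 2 = ((a i - b i : ℤ) : ℝ) ^ 2 := by push_cast; ring
          _ = 1 := by exact_mod_cast h2
      rw [this, Real.sqrt_one]
    · intro j _ hji
      rw [hj j hji]; ring
    · intro h; exact absurd (Finset.mem_univ i) h
  -- adjacent points in X have equal images
  have step : ∀ a b : Fin n → ℤ, a ∈ X → b ∈ X → C1Adj a b → f a = f b := by
    intro a b ha hb hadj
    apply hdist_eq
    have hd := hadj_dist a b hadj
    have hc := hcontr a ha b hb
    rw [hd] at hc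
    have := (hβ 1 (by norm_num)).2
    linarith
  intro x hx y hy
  have hpath := hconn x hx y hy
  induction hpath with
  | refl => rfl
  | tail _ hbc ih => exact (ih hbc.1).trans (step _ _ hbc.1 hbc.2.1 hbc.2.2)
end

section
/- Let X be a nonempty subset of ℤ^n equipped with the Euclidean metric d. Let β: [0,∞) → [0,1) be such that for every sequence (t_k) in [0,∞), if β(t_k) → 1 then t_k → 0. Let f: X → X satisfy d(f(x),f(y)) ≤ β(d(x,y))·d(x,y) for all x,y ∈ X. Then f has a unique fixed point in X. -/
open Filter Topology

lemma euclDist_nonneg {n : ℕ} (x y : Fin n → ℤ) : 0 ≤ euclDist x y :=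
  Real.sqrt_nonneg _

lemma euclDist_sq {n : ℕ} (x y : Fin n → ℤ) :
    euclDist x y ^ 2 = ∑ i, ((x i : ℝ) - (y i : ℝ)) ^ 2 := by
  rw [euclDist, Real.sq_sqrt]
  positivity

lemma euclDist_eq_zero_iff {n : ℕ} (x y : Fin n → ℤ) :
    euclDist x y = 0 ↔ x = y := by
  rw [euclDist, Real.sqrt_eq_zero (by positivity)]
  constructor
  · intro h
    funext i
    have := (Finset.sum_eq_zero_iff_of_nonneg (fun i _ => by positivity)).mp h i
      (Finset.mem_univ i)
    have : (x i : ℝ) = (y i : ℝ) := by nlinarith [this]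
    exact_mod_cast this
  · intro h; subst h; simp

lemma euclDist_sq_nat {n : ℕ} (x y : Fin n → ℤ) :
    euclDist x y ^ 2 = ((∑ i, (x i - y i) ^ 2).toNat : ℝ) := by
  rw [euclDist_sq]
  have h : (0 : ℤ) ≤ ∑ i, (x i - y i) ^ 2 := Finset.sum_nonneg fun i _ => by positivity
  rw [show ((∑ i, (x i - y i) ^ 2).toNat : ℝ) = ((∑ i, (x i - y i) ^ 2 : ℤ) : ℝ) from by
    exact_mod_cast Int.toNat_of_nonneg h]
  push_cast
  ring

/-- A digital Geraghty contraction map on a nonempty subset of ℤ^n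
with the Euclidean metric has a unique fixed point. -/
theorem geraghty_unique_fixed_point
    {n : ℕ} (X : Set (Fin n → ℤ)) (hne : X.Nonempty)
    (β : ℝ → ℝ) (hβ : ∀ t, 0 ≤ t → 0 ≤ β t ∧ β t < 1)
    (hG : ∀ t : ℕ → ℝ, (∀ k, 0 ≤ t k) →
      Filter.Tendsto (fun k => β (t k)) Filter.atTop (nhds 1) →
      Filter.Tendsto t Filter.atTop (nhds 0))
    (f : (Fin n → ℤ) → (Fin n → ℤ)) (hf : ∀ x ∈ X, f x ∈ X)
    (hcontr : ∀ x ∈ X, ∀ y ∈ X,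
      euclDist (f x) (f y) ≤ β (euclDist x y) * euclDist x y) :
    ∃! u, u ∈ X ∧ f u = u := by
  -- strict contraction on distinct points
  have hstrict : ∀ x ∈ X, ∀ y ∈ X, x ≠ y → euclDist (f x) (f y) < euclDist x y := by
    intro x hx y hy hxy
    have hd : 0 < euclDist x y := by
      rcases lt_or_eq_of_le (euclDist_nonneg x y) with h | h
      · exact h
      · exact absurd ((euclDist_eq_zero_iff x y).mp h.symm) hxy
    calc euclDist (f x) (f y) ≤ β (euclDist x y) * euclDist x y := hcontr x hx y hy
      _ < 1 * euclDist x y := by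
          exact mul_lt_mul_of_pos_right (hβ _ (euclDist_nonneg x y)).2 hd
      _ = euclDist x y := one_mul _
  obtain ⟨x₀, hx₀⟩ := hne
  -- the orbit
  set a : ℕ → Fin n → ℤ := fun k => f^[k] x₀ with ha
  have haX : ∀ k, a k ∈ X := by
    intro k
    induction k with
    | zero => simpa [ha] using hx₀
    | succ k ih => simpa [ha, Function.iterate_succ_apply'] using hf _ ih
  have hstep : ∀ k, a (k + 1) = f (a k) := by
    intro k; simp [ha, Function.iterate_succ_apply']
  -- squared distances as naturals
  set m : ℕ → ℕ := fun k => (∑ i, (a k i - a (k + 1) i) ^ 2).toNat with hm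
  -- there exists k with a k = a (k+1)
  have hex : ∃ k, a k = a (k + 1) := by
    by_contra hc
    push_neg at hc
    have hdec : ∀ k, m (k + 1) < m k := by
      intro k
      have h1 : euclDist (f (a k)) (f (a (k + 1))) < euclDist (a k) (a (k + 1)) :=
        hstrict _ (haX k) _ (haX (k + 1)) (hc k)
      rw [← hstep k, ← hstep (k + 1)] at h1
      have h2 : euclDist (a (k + 1)) (a (k + 1 + 1)) ^ 2 < euclDist (a k) (a (k + 1)) ^ 2 := by
        have := euclDist_nonneg (a (k + 1)) (a (k + 1 + 1))
        nlinarith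
      rw [euclDist_sq_nat, euclDist_sq_nat] at h2
      exact_mod_cast h2
    have hbd : ∀ k, m k + k ≤ m 0 := by
      intro k
      induction k with
      | zero => simp
      | succ k ih => have := hdec k; omega
    have := hbd (m 0 + 1)
    omega
  obtain ⟨k, hk⟩ := hex
  refine ⟨a k, ⟨haX k, by rw [← hstep k, ← hk]⟩, ?_⟩
  rintro v ⟨hvX, hvfix⟩
  by_contra hne'
  have h := hstrict v hvX (a k) (haX k) hne'
  rw [hvfix, ← hstep k, ← hk] at h
  exact lt_irrefl _ h
end

section
/- Let D = {(1,0), (0,1), (-1,0), (0,-1)} ⊆ ℤ² with the Euclidean metric d, let S be the identity map on D, and let T: D → D be given by T(x) = -x. Then for every α with 0 < α < 1/2 and all x,y ∈ D, d(S(x),T(y)) ≤ α·d(x,S(x)) + d(y,T(y)), yet T has no fixed point in D. (This refutes the claim that any self-maps S,T of a digital metric space satisfying d(Sx,Ty) ≤ α·d(x,Sx) + d(y,Ty) for all x,y and some 0 < α < 1/2 must have a unique common fixed point.) -/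
open Filter Topology

/-- The Euclidean metric on ℤ². -/
noncomputable def euclDist2 (a b : ℤ × ℤ) : ℝ :=
  Real.sqrt (((a.1 : ℝ) - (b.1 : ℝ)) ^ 2 + ((a.2 : ℝ) - (b.2 : ℝ)) ^ 2)

/-- The "diamond" in ℤ². -/
def Diamond : Set (ℤ × ℤ) :=
  {(1, 0), (0, 1), (-1, 0), (0, -1)}

/-- On the diamond D with the Euclidean metric, S = id and
T x = -x satisfy d(Sx,Ty) ≤ α·d(x,Sx) + d(y,Ty) for every 0 < α < 1/2 and all
x, y ∈ D, yet T has no fixed point in D. -/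
theorem diamond_counterexample :
    (∀ α : ℝ, 0 < α → α < 1 / 2 → ∀ x ∈ Diamond, ∀ y ∈ Diamond,
      euclDist2 (id x) (-y) ≤ α * euclDist2 x (id x) + euclDist2 y (-y)) ∧
      ¬∃ u ∈ Diamond, -u = u := by
  constructor
  · intro α hα _ x hx y hy
    have hself : euclDist2 x (id x) = 0 := by
      simp [euclDist2]
    rw [hself, mul_zero, zero_add]
    rcases hx with h | h | h | h <;> rcases hy with h' | h' | h' | h' <;>
      subst h <;> subst h' <;>
      simp only [euclDist2, Prod.fst_neg, Prod.snd_neg, id] <;>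
      push_cast <;>
      apply Real.sqrt_le_sqrt <;> norm_num
  · rintro ⟨u, hu, h⟩
    rcases hu with h' | h' | h' | h' <;> subst h' <;>
      simp [Prod.ext_iff] at h
end

section
/- Let S: ℤ → ℤ be given by S(x) = x + 1, with the metric d(x,y) = |x − y|. Then S is bijective, d(S(x),S(y)) = d(x,y) for all x,y ∈ ℤ (so with ψ(t) = t and α ≡ 1, S satisfies ψ(d(Sx,Sy)) ≥ α(x,y)·d(x,y)), S is c_1-continuous, and S has no fixed point. (This refutes the assertions that a bijective, continuous, digital α-ψ expansive mapping on a complete digital metric space with α-admissible inverse must have a fixed point.) -/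
open Filter Topology

/-- The map S(x) = x + 1 on ℤ with d(x,y) = |x - y| is bijective,
preserves distances (hence with ψ(t) = t and α ≡ 1 it is a digital α-ψ expansive
mapping), is c₁-continuous, yet has no fixed point. -/
theorem successor_is_expansive_without_fixed_point
    (S : ℤ → ℤ) (hS : ∀ x, S x = x + 1) :
    Function.Bijective S ∧
    (∀ x y : ℤ, dist (S x) (S y) = dist x y) ∧
    (∀ x y : ℤ, (fun t : ℝ => t) (dist (S x) (S y)) ≥
      (fun _ _ : ℤ => (1 : ℝ)) x y * dist x y) ∧
    (∀ x y : ℤ, (x - y).natAbs = 1 → (S x - S y).natAbs ≤ 1) ∧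
    (∀ x : ℤ, S x ≠ x) := by
  have hdist : ∀ x y : ℤ, dist (S x) (S y) = dist x y := by
    intro x y; rw [hS, hS]; simp [Int.dist_eq]
  refine ⟨⟨fun a b h => ?_, fun b => ⟨b - 1, by rw [hS]; ring⟩⟩, hdist, ?_, ?_, ?_⟩
  · rw [hS, hS] at h; omega
  · intro x y; simp [hdist x y]
  · intro x y h; rw [hS, hS]; omega
  · intro x; rw [hS]; omega
end
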